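/- Every half-balanced structure on a braided monoidal category induces a balanced structure via θ_X := a_{X*} ∘ a_X; that is, the natural automorphisms θ_X so defined satisfy θ_{X⊗Y} = (θ_X ⊗ θ_Y) ∘ β_{Y,X} ∘ β_{X,Y}. -/

import Mathlib

open CategoryTheory MonoidalCategory

universe u v

variable (C : Type u) [Category.{v} C] [MonoidalCategory C] [BraidedCategory C]

/-- A half-balanced structure on a braided monoidal category: an involutive autofunctor
`*` which anti-commutes with the tensor product and is compatible with the braiding,
together with a natural family of isomorphisms `a_X : X ≅ X*` satisfying
`a_{X⊗Y} = (a_Y ⊗ a_X) ∘ β_{X,Y}`. -/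
structure HalfBalanced where
  star : C → C
  starMap : ∀ {X Y : C}, (X ⟶ Y) → (star X ⟶ star Y)
  invol : ∀ X : C, star (star X) = X
  star_tensor : ∀ X Y : C, star (X ⊗ Y) = star Y ⊗ star X
  starMap_id : ∀ X : C, starMap (𝟙 X) = 𝟙 (star X)
  starMap_comp : ∀ {X Y Z : C} (f : X ⟶ Y) (g : Y ⟶ Z),
    starMap (f ≫ g) = starMap f ≫ starMap g
  starMap_invol : ∀ {X Y : C} (f : X ⟶ Y),
    starMap (starMap f) = eqToHom (invol X) ≫ f ≫ eqToHom (invol Y).symm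
  starMap_tensor : ∀ {X X' Y Y' : C} (f : X ⟶ X') (g : Y ⟶ Y'),
    starMap (f ⊗ₘ g) =
      eqToHom (star_tensor X Y) ≫ (starMap g ⊗ₘ starMap f) ≫ eqToHom (star_tensor X' Y').symm
  star_braiding : ∀ X Y : C,
    starMap (β_ X Y).hom =
      eqToHom (star_tensor X Y) ≫ (β_ (star Y) (star X)).hom ≫ eqToHom (star_tensor Y X).symm
  a : ∀ X : C, X ≅ star X
  a_natural : ∀ {X Y : C} (f : X ⟶ Y), f ≫ (a Y).hom = (a X).hom ≫ starMap f
  a_tensor : ∀ X Y : C,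
    (a (X ⊗ Y)).hom =
      (β_ X Y).hom ≫ ((a Y).hom ⊗ₘ (a X).hom) ≫ eqToHom (star_tensor X Y).symm

variable {C}

/-- The balance induced by a half-balanced structure: `θ_X := a_{X*} ∘ a_X`. -/
def HalfBalanced.θ (hb : HalfBalanced C) (X : C) : X ≅ X :=
  hb.a X ≪≫ hb.a (hb.star X) ≪≫ eqToIso (hb.invol X)

/-- A half-balanced structure induces a balanced structure via `θ_X := a_{X*} ∘ a_X`:
the `θ_X` are natural automorphisms satisfying
`θ_{X⊗Y} = (θ_X ⊗ θ_Y) ∘ β_{Y,X} ∘ β_{X,Y}`. -/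
theorem HalfBalanced.theta_balanced (hb : HalfBalanced C) :
    (∀ {X Y : C} (f : X ⟶ Y), f ≫ (hb.θ Y).hom = (hb.θ X).hom ≫ f) ∧
    (∀ X Y : C,
      (hb.θ (X ⊗ Y)).hom =
        (β_ X Y).hom ≫ (β_ Y X).hom ≫ ((hb.θ X).hom ⊗ₘ (hb.θ Y).hom)) := by

  have starMap_eqToHom : ∀ {X Y : C} (h : X = Y),
      hb.starMap (eqToHom h) = eqToHom (congrArg hb.star h) := by
    intro X Y h; subst h; simp [hb.starMap_id]
  have eqToHom_tensor : ∀ {X X' Y Y' : C} (h : X = X') (h' : Y = Y'),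
      (eqToHom h ⊗ₘ eqToHom h') = eqToHom (by rw [h, h'] : X ⊗ Y = X' ⊗ Y') := by
    intro X X' Y Y' h h'; subst h; subst h'
    simp [MonoidalCategory.id_tensorHom_id]
  constructor
  · intro X Y f
    simp only [HalfBalanced.θ, Iso.trans_hom, eqToIso.hom]
    slice_lhs 1 2 => rw [hb.a_natural f]
    slice_lhs 2 3 => rw [hb.a_natural (hb.starMap f)]
    simp [hb.starMap_invol]
  · intro X Y
    have key : eqToHom (hb.star_tensor X Y).symm ≫ (hb.a (hb.star (X ⊗ Y))).hom
        = (hb.a (hb.star Y ⊗ hb.star X)).hom ≫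
          eqToHom (congrArg hb.star (hb.star_tensor X Y).symm) := by
      rw [hb.a_natural (eqToHom (hb.star_tensor X Y).symm), starMap_eqToHom]
    simp only [HalfBalanced.θ, Iso.trans_hom, eqToIso.hom]
    rw [hb.a_tensor X Y]
    simp only [Category.assoc]
    rw [reassoc_of% key, hb.a_tensor (hb.star Y) (hb.star X)]
    simp only [Category.assoc, eqToHom_trans]
    rw [BraidedCategory.braiding_naturality_assoc]
    rw [← eqToHom_tensor (hb.invol X) (hb.invol Y)]
    simp [MonoidalCategory.tensorHom_comp_tensorHom]
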